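/- Let M be a von Neumann algebra and φ, ψ ∈ M_* normal functionals with zs(φ)·zs(ψ) = 0 (mutually singular). Then for all α, β ∈ ℂ, ‖αφ + βψ‖ = |α|·‖φ‖ + |β|·‖ψ‖. -/

import Mathlib

/-- A projection commuting with everything. -/
def IsCentralProjection {M : Type*} [NonUnitalRing M] [Star M] (z : M) : Prop :=
  z * z = z ∧ star z = z ∧ ∀ x : M, z * x = x * z

/-- `z` is the central support of the functional `φ`. -/
def IsCentralSupport {M : Type*} [Ring M] [StarRing M] (φ : M → ℂ) (z : M) : Prop :=
  IsCentralProjection z ∧ (∀ x : M, φ (x * z) = φ x) ∧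
    ∀ z' : M, IsCentralProjection z' → (∀ x : M, φ (x * z') = φ x) → z * z' = z

private lemma aux_pow_sum {M : Type*} [Ring M] (p q : M) (hpq : p * q = 0) (hqp : q * p = 0) :
    ∀ n : ℕ, n ≠ 0 → (p + q) ^ n = p ^ n + q ^ n := by
  intro n hn
  induction n with
  | zero => simp at hn
  | succ k ih =>
    rcases Nat.eq_zero_or_pos k with hk | hk
    · simp [hk]
    · rw [pow_succ, ih hk.ne', add_mul, mul_add, mul_add, pow_succ, pow_succ]
      obtain ⟨m, rfl⟩ := Nat.exists_eq_succ_of_ne_zero hk.ne'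
      have h1 : p ^ (m + 1) * q = 0 := by
        rw [pow_succ, mul_assoc, hpq, mul_zero]
      have h2 : q ^ (m + 1) * p = 0 := by
        rw [pow_succ, mul_assoc, hqp, mul_zero]
      rw [h1, h2]
      abel

private lemma aux_real_le {X Y : ℝ} (hX : 0 ≤ X) (hY : 0 ≤ Y)
    (h : ∀ n : ℕ, X ^ (2 ^ n) ≤ 2 * Y ^ (2 ^ n)) : X ≤ Y := by
  rcases eq_or_lt_of_le hY with hY0 | hY0
  · have := h 0
    simpa [← hY0] using this.trans (by simp [← hY0])
  by_contra hlt
  push_neg at hlt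
  have hr : 1 < X / Y := (one_lt_div hY0).mpr hlt
  obtain ⟨n, hn⟩ := pow_unbounded_of_one_lt (2 : ℝ) hr
  have h1 : (X / Y) ^ n ≤ (X / Y) ^ (2 ^ n) :=
    pow_le_pow_right₀ hr.le (Nat.lt_two_pow_self (n := n)).le
  have h2 : (X / Y) ^ (2 ^ n) ≤ 2 := by
    rw [div_pow, div_le_iff₀ (by positivity)]
    linarith [h n]
  linarith

private lemma aux_norm_add_le_max {M : Type*} [NormedRing M] [StarRing M] [CStarRing M]
    (a b : M) (h1 : star a * b = 0) (h2 : a * star b = 0) :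
    ‖a + b‖ ≤ max ‖a‖ ‖b‖ := by
  set p := star a * a with hp
  set q := star b * b with hq
  have hpsa : IsSelfAdjoint p := by simp [hp, IsSelfAdjoint, star_mul]
  have hqsa : IsSelfAdjoint q := by simp [hq, IsSelfAdjoint, star_mul]
  have h2' : b * star a = 0 := by
    have := congrArg star h2; simpa using this
  have h1' : star b * a = 0 := by
    have := congrArg star h1; simpa [star_mul] using this
  have hpq : p * q = 0 := by
    rw [hp, hq, mul_assoc, ← mul_assoc a, h2, zero_mul, mul_zero]
  have hqp : q * p = 0 := by
    rw [hp, hq, mul_assoc, ← mul_assoc b, h2', zero_mul, mul_zero]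
  have hsum : star (a + b) * (a + b) = p + q := by
    rw [star_add, add_mul, mul_add, mul_add, h1, h1']
    abel
  have hsa : IsSelfAdjoint (p + q) := hpsa.add hqsa
  have hkey : ‖p + q‖ ≤ max ‖p‖ ‖q‖ := by
    apply aux_real_le (norm_nonneg _) (le_max_of_le_left (norm_nonneg _))
    intro n
    have e1 : ‖(p + q) ^ 2 ^ n‖ = ‖p + q‖ ^ 2 ^ n := by
      have h := congrArg ((↑·) : NNReal → ℝ) (hsa.nnnorm_pow_two_pow n)
      simpa [coe_nnnorm, NNReal.coe_pow] using h
    calc ‖p + q‖ ^ 2 ^ n = ‖(p + q) ^ 2 ^ n‖ := e1.symm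
      _ = ‖p ^ 2 ^ n + q ^ 2 ^ n‖ := by
          rw [aux_pow_sum p q hpq hqp _ (by positivity)]
      _ ≤ ‖p ^ 2 ^ n‖ + ‖q ^ 2 ^ n‖ := norm_add_le _ _
      _ ≤ ‖p‖ ^ 2 ^ n + ‖q‖ ^ 2 ^ n :=
          add_le_add (norm_pow_le' p (by positivity)) (norm_pow_le' q (by positivity))
      _ ≤ 2 * max ‖p‖ ‖q‖ ^ 2 ^ n := by
          have := pow_le_pow_left₀ (norm_nonneg p) (le_max_left ‖p‖ ‖q‖) (2 ^ n)
          have := pow_le_pow_left₀ (norm_nonneg q) (le_max_right ‖p‖ ‖q‖) (2 ^ n)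
          linarith
  have hab : ‖a + b‖ * ‖a + b‖ = ‖p + q‖ := by
    rw [← hsum, CStarRing.norm_star_mul_self]
  have hpa : ‖p‖ = ‖a‖ * ‖a‖ := CStarRing.norm_star_mul_self
  have hqb : ‖q‖ = ‖b‖ * ‖b‖ := CStarRing.norm_star_mul_self
  have hm : max ‖p‖ ‖q‖ ≤ max ‖a‖ ‖b‖ * max ‖a‖ ‖b‖ := by
    rw [hpa, hqb]
    rcases le_total ‖a‖ ‖b‖ with h | h <;>
      [rw [max_eq_right h]; rw [max_eq_left h]] <;>
      apply max_le <;> nlinarith [norm_nonneg a, norm_nonneg b]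
  nlinarith [norm_nonneg (a + b), le_max_left ‖a‖ ‖b‖, norm_nonneg a, hab ▸ hkey.trans hm]

private lemma aux_phase (w : ℂ) : ∃ c : ℂ, ‖c‖ = 1 ∧ c * w = (‖w‖ : ℂ) := by
  rcases eq_or_ne w 0 with rfl | hw
  · exact ⟨1, by simp, by simp⟩
  · refine ⟨(‖w‖ : ℂ) / w, ?_, ?_⟩
    · rw [norm_div, Complex.norm_real, norm_norm, div_self (norm_ne_zero_iff.mpr hw)]
    · rw [div_mul_cancel₀ _ hw]

private lemma aux_proj_norm_le {M : Type*} [NormedRing M] [StarRing M] [CStarRing M]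
    {z : M} (h : IsCentralProjection z) : ‖z‖ ≤ 1 := by
  obtain ⟨hidem, hstar, -⟩ := h
  have h1 : ‖z‖ * ‖z‖ = ‖z‖ := by
    conv_rhs => rw [← hidem]
    rw [← CStarRing.norm_star_mul_self (x := z), hstar, hidem]
  nlinarith [norm_nonneg z]

/-- If `φ` and `ψ` have mutually orthogonal central supports
(`zs(φ)·zs(ψ) = 0`), then `‖αφ + βψ‖ = |α|‖φ‖ + |β|‖ψ‖` for all scalars `α, β`. -/
theorem stmt5 {M : Type*} [NormedRing M] [StarRing M] [CStarRing M] [NormedAlgebra ℂ M]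
    [StarModule ℂ M] [CompleteSpace M]
    (φ ψ : M →L[ℂ] ℂ) (zφ zψ : M)
    (hφ : IsCentralSupport (⇑φ) zφ) (hψ : IsCentralSupport (⇑ψ) zψ)
    (horth : zφ * zψ = 0) :
    ∀ α β : ℂ, ‖α • φ + β • ψ‖ = ‖α‖ * ‖φ‖ + ‖β‖ * ‖ψ‖ := by
  obtain ⟨hφproj, hφsupp, -⟩ := hφ
  obtain ⟨hψproj, hψsupp, -⟩ := hψ
  obtain ⟨hφidem, hφstar, hφcomm⟩ := hφproj
  obtain ⟨hψidem, hψstar, hψcomm⟩ := hψproj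
  have horth' : zψ * zφ = 0 := by rw [← hφcomm zψ]; exact horth
  intro α β
  refine le_antisymm ((norm_add_le _ _).trans (le_of_eq (by rw [norm_smul α φ, norm_smul β ψ]))) ?_
  refine le_of_forall_pos_le_add fun ε hε => ?_
  set ε' := ε / (‖α‖ + ‖β‖ + 1) with hε'def
  have hε'pos : 0 < ε' := by positivity
  obtain ⟨x, hx1, hx2⟩ := φ.exists_lt_apply_of_lt_opNorm (r := ‖φ‖ - ε') (by linarith)
  obtain ⟨y, hy1, hy2⟩ := ψ.exists_lt_apply_of_lt_opNorm (r := ‖ψ‖ - ε') (by linarith)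
  obtain ⟨c, hc1, hc2⟩ := aux_phase (α * φ x)
  obtain ⟨d, hd1, hd2⟩ := aux_phase (β * ψ y)
  set a := c • (x * zφ) with ha
  set b := d • (y * zψ) with hb
  have hor1 : star a * b = 0 := by
    have key : star (x * zφ) * (y * zψ) = 0 := by
      calc star (x * zφ) * (y * zψ)
          = star x * (zφ * (y * zψ)) := by
            rw [star_mul, hφstar, hφcomm (star x), mul_assoc]
        _ = star x * (y * (zψ * zφ)) := by rw [hφcomm (y * zψ), mul_assoc]
        _ = 0 := by rw [horth', mul_zero, mul_zero]
    rw [ha, hb, star_smul, smul_mul_assoc, mul_smul_comm, key, smul_zero, smul_zero]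
  have hor2 : a * star b = 0 := by
    have key : (x * zφ) * star (y * zψ) = 0 := by
      calc (x * zφ) * star (y * zψ)
          = x * ((zφ * zψ) * star y) := by
            rw [star_mul, hψstar, mul_assoc, ← mul_assoc zφ]
        _ = 0 := by rw [horth, zero_mul, mul_zero]
    rw [ha, hb, star_smul, smul_mul_assoc, mul_smul_comm, key, smul_zero, smul_zero]
  have hnorm_u : ‖a + b‖ ≤ 1 := by
    refine (aux_norm_add_le_max a b hor1 hor2).trans (max_le ?_ ?_)
    · rw [ha, norm_smul, hc1, one_mul]
      calc ‖x * zφ‖ ≤ ‖x‖ * ‖zφ‖ := norm_mul_le _ _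
        _ ≤ 1 := by
            have := aux_proj_norm_le (M := M) ⟨hφidem, hφstar, hφcomm⟩
            nlinarith [norm_nonneg x, norm_nonneg zφ]
    · rw [hb, norm_smul, hd1, one_mul]
      calc ‖y * zψ‖ ≤ ‖y‖ * ‖zψ‖ := norm_mul_le _ _
        _ ≤ 1 := by
            have := aux_proj_norm_le (M := M) ⟨hψidem, hψstar, hψcomm⟩
            nlinarith [norm_nonneg y, norm_nonneg zψ]
  have hφb : φ (y * zψ) = 0 := by
    have h := hφsupp (y * zψ)
    rw [mul_assoc, horth', mul_zero] at h
    rw [← h, map_zero]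
  have hψa : ψ (x * zφ) = 0 := by
    have h := hψsupp (x * zφ)
    rw [mul_assoc, horth, mul_zero] at h
    rw [← h, map_zero]
  have happ : (α • φ + β • ψ) (a + b) = ((‖α * φ x‖ + ‖β * ψ y‖ : ℝ) : ℂ) := by
    simp only [ContinuousLinearMap.add_apply, ContinuousLinearMap.smul_apply, map_add, ha, hb,
      map_smul, hφsupp x, hψsupp y, hφb, hψa, smul_eq_mul, mul_zero, add_zero, zero_add]
    push_cast
    linear_combination hc2 + hd2
  have h1 : ‖(α • φ + β • ψ) (a + b)‖ ≤ ‖α • φ + β • ψ‖ := by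
    calc ‖(α • φ + β • ψ) (a + b)‖ ≤ ‖α • φ + β • ψ‖ * ‖a + b‖ :=
          (α • φ + β • ψ).le_opNorm _
      _ ≤ ‖α • φ + β • ψ‖ * 1 := mul_le_mul_of_nonneg_left hnorm_u (norm_nonneg _)
      _ = ‖α • φ + β • ψ‖ := mul_one _
  have h2 : ‖α‖ * (‖φ‖ - ε') + ‖β‖ * (‖ψ‖ - ε') ≤ ‖(α • φ + β • ψ) (a + b)‖ := by
    rw [happ, Complex.norm_real, Real.norm_of_nonneg (by positivity), norm_mul, norm_mul]
    have A := mul_le_mul_of_nonneg_left hx2.le (norm_nonneg α)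
    have B := mul_le_mul_of_nonneg_left hy2.le (norm_nonneg β)
    linarith
  have hε'' : (‖α‖ + ‖β‖) * ε' ≤ ε := by
    rw [hε'def, ← mul_div_assoc, div_le_iff₀ (by positivity : (0:ℝ) < ‖α‖ + ‖β‖ + 1)]
    nlinarith [norm_nonneg α, norm_nonneg β, hε.le]
  linarith
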